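/- Let a group G act properly on a set M (i.e., all point stabilizers are finite, and more strongly: for every finite subsets F₁, F₂ ⊆ M only finitely many g ∈ G satisfy gF₁ ∩ F₂ ≠ ∅). Let A₀, A₁ be subgroups of G and E₀, E₁ subsets of M with E₀ ∩ E₁ ≠ ∅, where each E_ι is A_ι-invariant and A_ι-finite. Then E₀ ∩ E₁ is infinite if and only if A₀ ∩ A₁ is infinite. -/

import Mathlib

/-- If G acts properly on M, A₀, A₁ ≤ G, and E₀, E₁ are non-disjoint
A_ι-invariant A_ι-finite subsets of M, then E₀ ∩ E₁ is infinite iff A₀ ∩ A₁ is infinite. -/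
theorem infinite_inter_iff_infinite_inter_subgroups
    {G M : Type*} [Group G] [MulAction G M]
    (hproper : ∀ m m' : M, {g : G | g • m = m'}.Finite)
    (A₀ A₁ : Subgroup G) (E₀ E₁ : Set M)
    (hinv₀ : ∀ g ∈ A₀, ∀ x ∈ E₀, g • x ∈ E₀)
    (hinv₁ : ∀ g ∈ A₁, ∀ x ∈ E₁, g • x ∈ E₁)
    (hfin₀ : ∃ F : Finset M, E₀ ⊆ ⋃ y ∈ F, {x | ∃ g ∈ A₀, g • y = x})
    (hfin₁ : ∃ F : Finset M, E₁ ⊆ ⋃ y ∈ F, {x | ∃ g ∈ A₁, g • y = x})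
    (hmeet : (E₀ ∩ E₁).Nonempty) :
    (E₀ ∩ E₁).Infinite ↔ ((A₀ ⊓ A₁ : Subgroup G) : Set G).Infinite := by
  obtain ⟨m, hm₀, hm₁⟩ := hmeet
  constructor
  · intro hinf
    obtain ⟨F₀, hF₀⟩ := hfin₀
    obtain ⟨F₁, hF₁⟩ := hfin₁
    -- find a pair of orbits whose intersection pattern is infinite
    have key : ∃ y₀ y₁ : M,
        {x : M | (∃ g ∈ A₀, g • y₀ = x) ∧ ∃ g ∈ A₁, g • y₁ = x}.Infinite := by
      by_contra hc
      push_neg at hc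
      apply hinf
      have hsub : E₀ ∩ E₁ ⊆ ⋃ y₀ ∈ F₀, ⋃ y₁ ∈ F₁,
          {x : M | (∃ g ∈ A₀, g • y₀ = x) ∧ ∃ g ∈ A₁, g • y₁ = x} := by
        rintro x ⟨hx₀, hx₁⟩
        have h0 := hF₀ hx₀
        have h1 := hF₁ hx₁
        simp only [Set.mem_iUnion] at h0 h1 ⊢
        obtain ⟨y₀, hy₀, hxy₀⟩ := h0
        obtain ⟨y₁, hy₁, hxy₁⟩ := h1
        exact ⟨y₀, hy₀, y₁, hy₁, hxy₀, hxy₁⟩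
      refine Set.Finite.subset ?_ hsub
      exact Set.Finite.biUnion F₀.finite_toSet fun y₀ _ =>
        Set.Finite.biUnion F₁.finite_toSet fun y₁ _ =>
          hc y₀ y₁
    obtain ⟨y₀, y₁, hS⟩ := key
    set S : Set M := {x : M | (∃ g ∈ A₀, g • y₀ = x) ∧ ∃ g ∈ A₁, g • y₁ = x} with hSdef
    obtain ⟨x₀, hx₀S⟩ := hS.nonempty
    obtain ⟨⟨b₀, hb₀, hb₀x⟩, ⟨b₁, hb₁, hb₁x⟩⟩ := hx₀S
    have hch : ∀ x : S, ∃ g₀ g₁ : G,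
        g₀ ∈ A₀ ∧ g₁ ∈ A₁ ∧ g₀ • y₀ = (x : M) ∧ g₁ • y₁ = (x : M) := by
      rintro ⟨x, ⟨g₀, hg₀, he₀⟩, ⟨g₁, hg₁, he₁⟩⟩
      exact ⟨g₀, g₁, hg₀, hg₁, he₀, he₁⟩
    choose a₀ a₁ hA₀ hA₁ he₀ he₁ using hch
    -- u x and v x both map x₀ to x
    set u : S → G := fun x => a₀ x * b₀⁻¹ with hu
    set v : S → G := fun x => a₁ x * b₁⁻¹ with hv
    have hux : ∀ x : S, u x • x₀ = (x : M) := by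
      intro x
      have : b₀⁻¹ • x₀ = y₀ := by rw [← hb₀x]; simp
      simp [hu, mul_smul, this, he₀ x]
    have hvx : ∀ x : S, v x • x₀ = (x : M) := by
      intro x
      have : b₁⁻¹ • x₀ = y₁ := by rw [← hb₁x]; simp
      simp [hv, mul_smul, this, he₁ x]
    have huA : ∀ x : S, u x ∈ A₀ := fun x => A₀.mul_mem (hA₀ x) (A₀.inv_mem hb₀)
    have hvA : ∀ x : S, v x ∈ A₁ := fun x => A₁.mul_mem (hA₁ x) (A₁.inv_mem hb₁)
    -- the element (v x)⁻¹ * u x stabilizes x₀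
    haveI : Finite ↥{g : G | g • x₀ = x₀} := (hproper x₀ x₀).to_subtype
    haveI : Infinite S := hS.to_subtype
    set w : S → ↥{g : G | g • x₀ = x₀} := fun x =>
      ⟨(v x)⁻¹ * u x, by
        show ((v x)⁻¹ * u x) • x₀ = x₀
        rw [mul_smul, hux x, inv_smul_eq_iff, hvx x]⟩ with hw
    obtain ⟨s, hsfib⟩ := Finite.exists_infinite_fiber w
    haveI : Infinite ↥(w ⁻¹' {s}) := hsfib
    obtain ⟨x₁⟩ : Nonempty ↥(w ⁻¹' {s}) := inferInstance
    -- key relation: for x in the fiber, u x = v x * s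
    have hrel : ∀ x : ↥(w ⁻¹' {s}), u x.1 = v x.1 * (s : G) := by
      intro x
      have hx : w x.1 = s := x.2
      have := congrArg Subtype.val hx
      simp only [hw] at this
      rw [← this]
      group
    refine Set.infinite_of_injective_forall_mem
      (f := fun x : ↥(w ⁻¹' {s}) => u x.1 * (u x₁.1)⁻¹) ?_ ?_
    · intro x x' hxx'
      have h1 : (u x.1 * (u x₁.1)⁻¹) • (x₁.1 : M) = (x.1 : M) := by
        rw [mul_smul, inv_smul_eq_iff.mpr (hux x₁.1).symm, hux x.1]
      have h2 : (u x'.1 * (u x₁.1)⁻¹) • (x₁.1 : M) = (x'.1 : M) := by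
        rw [mul_smul, inv_smul_eq_iff.mpr (hux x₁.1).symm, hux x'.1]
      have : (x.1 : M) = (x'.1 : M) := by
        rw [← h1, ← h2]; exact congrArg (fun g => g • (x₁.1 : M)) hxx'
      exact Subtype.ext (Subtype.ext this)
    · intro x
      have hmemA₀ : u x.1 * (u x₁.1)⁻¹ ∈ A₀ :=
        A₀.mul_mem (huA x.1) (A₀.inv_mem (huA x₁.1))
      have hmemA₁ : u x.1 * (u x₁.1)⁻¹ ∈ A₁ := by
        have : u x.1 * (u x₁.1)⁻¹ = v x.1 * (v x₁.1)⁻¹ := by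
          rw [hrel x, hrel x₁]; group
        rw [this]
        exact A₁.mul_mem (hvA x.1) (A₁.inv_mem (hvA x₁.1))
      exact ⟨hmemA₀, hmemA₁⟩
  · intro hG
    by_contra hfin
    rw [Set.not_infinite] at hfin
    apply hG
    have hsub : ((A₀ ⊓ A₁ : Subgroup G) : Set G) ⊆
        ⋃ m' ∈ E₀ ∩ E₁, {g : G | g • m = m'} := by
      intro g hg
      obtain ⟨hg₀, hg₁⟩ := hg
      have : g • m ∈ E₀ ∩ E₁ := ⟨hinv₀ g hg₀ m hm₀, hinv₁ g hg₁ m hm₁⟩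
      simp only [Set.mem_iUnion]
      exact ⟨g • m, this, rfl⟩
    exact Set.Finite.subset (Set.Finite.biUnion hfin fun m' _ => hproper m m') hsub
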